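/- For compact convex subsets K and L of ℝ², the strict inequality Area(K + L) > Area(K) + Area(L) holds unless K is a single point, or L is a single point, or K and L are two parallel segments (i.e. K = [a,b] and L = [c,d] are line segments with b − a and d − c linearly dependent). -/

import Mathlib

open MeasureTheory Pointwise

set_option linter.unusedTactic false
set_option linter.unreachableTactic false
set_option maxHeartbeats 1000000

namespace AuxArea

open Set

/-- vertical slice -/
def sl (S : Set (ℝ × ℝ)) (t : ℝ) : Set ℝ := Prod.mk t ⁻¹' S

lemma mem_sl {S : Set (ℝ×ℝ)} {t y : ℝ} : y ∈ sl S t ↔ (t, y) ∈ S := Iff.rfl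

lemma sl_compact {S : Set (ℝ×ℝ)} (hS : IsCompact S) (t : ℝ) : IsCompact (sl S t) := by
  have h : sl S t = Prod.snd '' (S ∩ (Prod.fst ⁻¹' {t})) := by
    ext y
    constructor
    · intro hy; exact ⟨(t, y), ⟨hy, rfl⟩, rfl⟩
    · rintro ⟨⟨u, v⟩, ⟨hm, hu⟩, rfl⟩
      simp only [mem_preimage, mem_singleton_iff] at hu
      rw [mem_sl, ← hu]; exact hm
  rw [h]
  exact ((hS.inter_right ((isClosed_singleton).preimage continuous_fst)).image continuous_snd)

lemma sl_add_sl {K L : Set (ℝ×ℝ)} {u v : ℝ} :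
    sl K u + sl L v ⊆ sl (K + L) (u + v) := by
  rintro y ⟨y1, h1, y2, h2, rfl⟩
  have := Set.add_mem_add (a := ((u, y1) : ℝ × ℝ)) (b := ((v, y2) : ℝ × ℝ)) h1 h2
  exact this

lemma oneDimBM {A B : Set ℝ} (hA : IsCompact A) (hB : IsCompact B)
    (hAne : A.Nonempty) (hBne : B.Nonempty) :
    volume A + volume B ≤ volume (A + B) := by
  set a := sSup A with ha
  set b := sInf B with hb
  have haA : a ∈ A := hA.sSup_mem hAne
  have hbB : b ∈ B := hB.sInf_mem hBne
  have h1 : b +ᵥ A ⊆ A + B := by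
    rintro x ⟨y, hy, rfl⟩
    simpa [add_comm] using Set.add_mem_add hy hbB
  have h2 : a +ᵥ B ⊆ A + B := by
    rintro x ⟨y, hy, rfl⟩
    exact Set.add_mem_add haA hy
  have hint : (b +ᵥ A) ∩ (a +ᵥ B) ⊆ {a + b} := by
    rintro x ⟨⟨y, hy, rfl⟩, ⟨z, hz, hz'⟩⟩
    have h3 : (b + y : ℝ) ≤ b + a := by
      have := le_csSup hA.bddAbove hy; linarith
    have hzz : a + z = b + y := by
      have := hz'
      simpa [vadd_eq_add] using this
    have h5 := csInf_le hB.bddBelow hz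
    have h4 : a + b ≤ b + y := by rw [← hzz]; linarith
    simp only [mem_singleton_iff, vadd_eq_add]
    linarith
  have hmB : MeasurableSet (a +ᵥ B) := by
    have : IsCompact (a +ᵥ B) := by
      rw [← Set.image_vadd]
      exact hB.image (continuous_add_left a)
    exact this.measurableSet
  have key := measure_union_add_inter (μ := volume) (b +ᵥ A) hmB
  have hz : volume ((b +ᵥ A) ∩ (a +ᵥ B)) = 0 :=
    measure_mono_null hint (measure_singleton _)
  rw [hz, add_zero, measure_vadd, measure_vadd] at key
  calc volume A + volume B = volume ((b +ᵥ A) ∪ (a +ᵥ B)) := key.symm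
    _ ≤ volume (A + B) := measure_mono (Set.union_subset h1 h2)

lemma proj_interval {K : Set (ℝ×ℝ)} (hKc : IsCompact K) (hKv : Convex ℝ K)
    (hKne : K.Nonempty) :
    Icc (sInf (Prod.fst '' K)) (sSup (Prod.fst '' K)) ⊆ Prod.fst '' K := by
  have hc : IsCompact (Prod.fst '' K) := hKc.image continuous_fst
  have hne : (Prod.fst '' K).Nonempty := hKne.image _
  have hconv : Convex ℝ (Prod.fst '' K) := by
    have := hKv.linear_image (LinearMap.fst ℝ ℝ ℝ)
    simpa using this
  have h1 := hc.sInf_mem hne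
  have h2 := hc.sSup_mem hne
  intro t ht
  have := hconv.segment_subset h1 h2
  rw [segment_eq_Icc (le_trans ht.1 ht.2)] at this
  exact this ht

lemma sl_nonempty_of_mem_proj {K : Set (ℝ×ℝ)} {t : ℝ} (h : t ∈ Prod.fst '' K) :
    (sl K t).Nonempty := by
  obtain ⟨p, hp, rfl⟩ := h
  exact ⟨p.2, hp⟩


lemma lintegral_sub_const (g : ℝ → ENNReal) (a : ℝ) (S : Set ℝ) :
    ∫⁻ t in (fun t => t - a) ⁻¹' S, g (t - a) = ∫⁻ t in S, g t := by
  have mp : MeasurePreserving (fun t : ℝ => t - a) volume volume := by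
    simpa [sub_eq_add_neg] using measurePreserving_add_right (volume : Measure ℝ) (-a)
  exact mp.setLIntegral_comp_preimage_emb ((Homeomorph.subRight a).measurableEmbedding) g S

lemma mainIneq {K L : Set (ℝ×ℝ)} (hKc : IsCompact K) (hKv : Convex ℝ K)
    (hKne : K.Nonempty) (hLc : IsCompact L) (hLv : Convex ℝ L) (hLne : L.Nonempty)
    {p q r s : ℝ×ℝ} (hp : p ∈ K) (hq : q ∈ K) (hpq : p.1 < q.1)
    (hr : r ∈ L) (hs : s ∈ L) (hrs1 : r.1 = s.1) (hrs2 : r.2 < s.2) :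
    volume K + volume L < volume (K + L) := by
  classical
  set PK := Prod.fst '' K with hPK
  set PL := Prod.fst '' L with hPL
  have hPKc : IsCompact PK := hKc.image continuous_fst
  have hPLc : IsCompact PL := hLc.image continuous_fst
  have hPKne : PK.Nonempty := hKne.image _
  have hPLne : PL.Nonempty := hLne.image _
  set a := sInf PK with hadef
  set b := sSup PK with hbdef
  set aL := sInf PL with haLdef
  set bL := sSup PL with hbLdef
  set m := r.1 with hmdef
  have hmemK : ∀ x ∈ K, a ≤ x.1 ∧ x.1 ≤ b := fun x hx =>
    ⟨csInf_le hPKc.bddBelow ⟨x, hx, rfl⟩, le_csSup hPKc.bddAbove ⟨x, hx, rfl⟩⟩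
  have hmemL : ∀ x ∈ L, aL ≤ x.1 ∧ x.1 ≤ bL := fun x hx =>
    ⟨csInf_le hPLc.bddBelow ⟨x, hx, rfl⟩, le_csSup hPLc.bddAbove ⟨x, hx, rfl⟩⟩
  have hab : a < b := lt_of_le_of_lt (hmemK p hp).1 (lt_of_lt_of_le hpq (hmemK q hq).2)
  have haLm : aL ≤ m := (hmemL r hr).1
  have hmbL : m ≤ bL := (hmemL r hr).2
  have hKm : MeasurableSet K := hKc.measurableSet
  have hLm : MeasurableSet L := hLc.measurableSet
  have hKLc : IsCompact (K + L) := hKc.add hLc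
  have hKLm : MeasurableSet (K + L) := hKLc.measurableSet
  set F := fun t => volume (sl (K+L) t) with hFdef
  set gK := fun t => volume (sl K t) with hgKdef
  set gL := fun t => volume (sl L t) with hgLdef
  have hFmeas : Measurable F := measurable_measure_prodMk_left hKLm
  have hgKmeas : Measurable gK := measurable_measure_prodMk_left hKm
  have hgLmeas : Measurable gL := measurable_measure_prodMk_left hLm
  have hvol : ∀ (S : Set (ℝ×ℝ)), MeasurableSet S → volume S = ∫⁻ t, volume (sl S t) := by
    intro S hS
    rw [Measure.volume_eq_prod ℝ ℝ, Measure.prod_apply hS]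
    rfl
  -- restriction of total integrals to projection intervals
  have hrestr : ∀ (S : Set (ℝ×ℝ)) (u v : ℝ), MeasurableSet S →
      (∀ x ∈ S, u ≤ x.1 ∧ x.1 ≤ v) →
      volume S = ∫⁻ t in Icc u v, volume (sl S t) := by
    intro S u v hSm hb
    rw [hvol S hSm, ← lintegral_indicator measurableSet_Icc]
    congr 1
    ext t
    by_cases h : t ∈ Icc u v
    · simp [h]
    · have : sl S t = ∅ := by
        ext y
        simp only [mem_sl, mem_empty_iff_false, iff_false]
        intro hy
        exact h ⟨(hb _ hy).1, (hb _ hy).2⟩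
      simp [h, this]
  have hvolK : volume K = ∫⁻ t in Icc a b, gK t := hrestr K a b hKm hmemK
  have hvolL : volume L = ∫⁻ t in Icc aL bL, gL t := hrestr L aL bL hLm hmemL
  -- extreme points of K
  obtain ⟨pa, hpaK, hpa1⟩ := hPKc.sInf_mem hPKne
  obtain ⟨pb, hpbK, hpb1⟩ := hPKc.sSup_mem hPKne
  -- pointwise bounds
  have htrans : ∀ (x : ℝ×ℝ), x ∈ K → ∀ t, gL (t - x.1) ≤ F t := by
    intro x hx t
    have hsub : x.2 +ᵥ sl L (t - x.1) ⊆ sl (K+L) t := by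
      rintro y ⟨z, hzL, rfl⟩
      have hmem := Set.add_mem_add hx (hzL : ((t - x.1, z) : ℝ×ℝ) ∈ L)
      have heq : x + ((t - x.1, z) : ℝ×ℝ) = (t, x.2 + z) := by
        simp [Prod.ext_iff]
      rw [heq] at hmem
      exact hmem
    calc gL (t - x.1) = volume (x.2 +ᵥ sl L (t - x.1)) := (measure_vadd (μ := volume) x.2 (sl L (t - x.1))).symm
      _ ≤ F t := measure_mono hsub
  have hF1 : ∀ t, gL (t - a) ≤ F t := fun t => by
    simpa [hpa1] using htrans pa hpaK t
  have hF3 : ∀ t, gL (t - b) ≤ F t := fun t => by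
    simpa [hpb1] using htrans pb hpbK t
  have hslne : (sl L m).Nonempty := ⟨r.2, by rw [mem_sl, hmdef]; simpa using hr⟩
  have hF2 : ∀ t ∈ Ico (a + m) (b + m), gK (t - m) + volume (sl L m) ≤ F t := by
    intro t ht
    have h1 : t - m ∈ Icc a b := ⟨by linarith [ht.1], by linarith [ht.2]⟩
    have hne1 : (sl K (t-m)).Nonempty :=
      sl_nonempty_of_mem_proj (proj_interval hKc hKv hKne h1)
    calc gK (t-m) + volume (sl L m)
        ≤ volume (sl K (t-m) + sl L m) :=
          oneDimBM (sl_compact hKc _) (sl_compact hLc _) hne1 hslne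
      _ ≤ volume (sl (K+L) ((t-m)+m)) := measure_mono sl_add_sl
      _ = F t := by rw [sub_add_cancel]
  -- interval decomposition
  have hd12 : Disjoint (Ico (a+aL) (a+m)) (Ico (a+m) (b+m)) := by
    rw [Set.disjoint_left]
    rintro t ht1 ht2
    exact absurd ht2.1 (not_le.2 ht1.2)
  have hd123 : Disjoint (Ico (a+aL) (a+m) ∪ Ico (a+m) (b+m)) (Icc (b+m) (b+bL)) := by
    rw [Set.disjoint_left]
    rintro t (ht | ht) ht3
    · exact absurd ht3.1 (not_le.2 (lt_of_lt_of_le ht.2 (by linarith)))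
    · exact absurd ht3.1 (not_le.2 ht.2)
  have hstep : ∫⁻ t in (Ico (a+aL) (a+m) ∪ Ico (a+m) (b+m)) ∪ Icc (b+m) (b+bL), F t
      ≤ volume (K + L) := by
    rw [hvol _ hKLm]
    exact setLIntegral_le_lintegral _ _
  rw [lintegral_union measurableSet_Icc hd123, lintegral_union measurableSet_Ico hd12] at hstep
  -- evaluate the three pieces
  have hI1 : ∫⁻ t in Ico aL m, gL t ≤ ∫⁻ t in Ico (a+aL) (a+m), F t := by
    rw [← lintegral_sub_const gL a (Ico aL m), preimage_sub_const_Ico]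
    have : aL + a = a + aL := by ring
    rw [this, show m + a = a + m from by ring]
    exact lintegral_mono fun t => hF1 t
  have hI3 : ∫⁻ t in Icc m bL, gL t ≤ ∫⁻ t in Icc (b+m) (b+bL), F t := by
    rw [← lintegral_sub_const gL b (Icc m bL), preimage_sub_const_Icc]
    rw [show m + b = b + m from by ring, show bL + b = b + bL from by ring]
    exact lintegral_mono fun t => hF3 t
  have hI2 : volume K + volume (sl L m) * ENNReal.ofReal (b - a)
      ≤ ∫⁻ t in Ico (a+m) (b+m), F t := by
    have h1 : ∫⁻ t in Ico (a+m) (b+m), (gK (t - m) + volume (sl L m))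
        ≤ ∫⁻ t in Ico (a+m) (b+m), F t :=
      setLIntegral_mono hFmeas hF2
    have h2 : ∫⁻ t in Ico (a+m) (b+m), (gK (t - m) + volume (sl L m))
        = (∫⁻ t in Ico (a+m) (b+m), gK (t - m)) + volume (sl L m) * ENNReal.ofReal (b - a) := by
      rw [lintegral_add_right _ measurable_const, setLIntegral_const, Real.volume_Ico,
        show b + m - (a + m) = b - a from by ring]
    have h3 : ∫⁻ t in Ico (a+m) (b+m), gK (t - m) = ∫⁻ t in Ico a b, gK t := by
      rw [← lintegral_sub_const gK m (Ico a b), preimage_sub_const_Ico]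
    have h4 : ∫⁻ t in Ico a b, gK t = volume K := by
      rw [hvolK]
      exact setLIntegral_congr Ico_ae_eq_Icc
    calc volume K + volume (sl L m) * ENNReal.ofReal (b - a)
        = (∫⁻ t in Ico (a+m) (b+m), gK (t - m)) + volume (sl L m) * ENNReal.ofReal (b - a) := by
          rw [h3, h4]
      _ = ∫⁻ t in Ico (a+m) (b+m), (gK (t - m) + volume (sl L m)) := h2.symm
      _ ≤ _ := h1
  -- combine L parts
  have hLsplit : (∫⁻ t in Ico aL m, gL t) + (∫⁻ t in Icc m bL, gL t) = volume L := by
    have hd : Disjoint (Ico aL m) (Icc m bL) := by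
      rw [Set.disjoint_left]
      rintro t ht1 ht2
      exact absurd ht2.1 (not_le.2 ht1.2)
    rw [hvolL, ← Ico_union_Icc_eq_Icc haLm hmbL, lintegral_union measurableSet_Icc hd]
  -- total
  have htotal : volume K + volume L + volume (sl L m) * ENNReal.ofReal (b - a)
      ≤ volume (K + L) := by
    calc volume K + volume L + volume (sl L m) * ENNReal.ofReal (b - a)
        = (∫⁻ t in Ico aL m, gL t)
          + (volume K + volume (sl L m) * ENNReal.ofReal (b - a))
          + (∫⁻ t in Icc m bL, gL t) := by
          rw [← hLsplit]; ring
      _ ≤ (∫⁻ t in Ico (a+aL) (a+m), F t) + (∫⁻ t in Ico (a+m) (b+m), F t)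
          + (∫⁻ t in Icc (b+m) (b+bL), F t) := by
          gcongr
      _ ≤ volume (K + L) := hstep
  -- strictness
  have hslpos : volume (sl L m) ≠ 0 := by
    have hsub : Icc r.2 s.2 ⊆ sl L m := by
      intro y hy
      rw [mem_sl]
      set d := s.2 - r.2 with hd
      have hdpos : (0:ℝ) < d := sub_pos.2 hrs2
      have h1 : (0:ℝ) ≤ (s.2 - y)/d := div_nonneg (by linarith [hy.2]) hdpos.le
      have h2 : (0:ℝ) ≤ (y - r.2)/d := div_nonneg (by linarith [hy.1]) hdpos.le
      have h3 : (s.2 - y)/d + (y - r.2)/d = 1 := by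
        first
        | (field_simp; ring)
        | field_simp
      have hmem := hLv hr hs h1 h2 h3
      have heq : ((s.2 - y)/d) • r + ((y - r.2)/d) • s = ((m : ℝ), y) := by
        have hfst : ((s.2 - y)/d) * r.1 + ((y - r.2)/d) * s.1 = m := by
          rw [← hrs1, hmdef]
          first
          | (field_simp; ring)
          | field_simp
        have hsnd : ((s.2 - y)/d) * r.2 + ((y - r.2)/d) * s.2 = y := by
          field_simp
          ring
        simp [Prod.ext_iff, Prod.smul_fst, Prod.smul_snd, smul_eq_mul, hfst, hsnd]
      rw [heq] at hmem
      exact hmem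
    intro h0
    have hle : volume (Icc r.2 s.2) ≤ volume (sl L m) := measure_mono hsub
    rw [h0, le_zero_iff, Real.volume_Icc, ENNReal.ofReal_eq_zero] at hle
    linarith
  have hfin : volume K + volume L ≠ ⊤ :=
    ENNReal.add_ne_top.2 ⟨hKc.measure_lt_top.ne, hLc.measure_lt_top.ne⟩
  have hposmul : volume (sl L m) * ENNReal.ofReal (b - a) ≠ 0 := by
    apply mul_ne_zero hslpos
    rw [Ne, ENNReal.ofReal_eq_zero, not_le]
    linarith
  exact lt_of_lt_of_le (ENNReal.lt_add_right hfin hposmul) htotal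


lemma keyLemma {K L : Set (ℝ×ℝ)} (hKc : IsCompact K) (hKv : Convex ℝ K)
    (hKne : K.Nonempty) (hLc : IsCompact L) (hLv : Convex ℝ L) (hLne : L.Nonempty)
    {v w : ℝ×ℝ} (hind : LinearIndependent ℝ ![v, w])
    {pK pL : ℝ×ℝ} (hpK : pK ∈ K) (hpKv : pK + v ∈ K)
    (hpL : pL ∈ L) (hpLw : pL + w ∈ L) :
    volume K + volume L < volume (K + L) := by
  classical
  have hcard : Fintype.card (Fin 2) = Module.finrank ℝ (ℝ×ℝ) := by
    simp [Module.finrank_prod]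
  set B : Module.Basis (Fin 2) ℝ (ℝ×ℝ) := basisOfLinearIndependentOfCardEqFinrank hind hcard with hB
  set T : (ℝ×ℝ) ≃ₗ[ℝ] (ℝ×ℝ) := B.equiv (Module.Basis.finTwoProd ℝ) (Equiv.refl _) with hT
  have hBv : B 0 = v := by
    rw [hB, coe_basisOfLinearIndependentOfCardEqFinrank]; rfl
  have hBw : B 1 = w := by
    rw [hB, coe_basisOfLinearIndependentOfCardEqFinrank]; rfl
  have hTv : T v = ((1:ℝ), (0:ℝ)) := by
    rw [← hBv, hT, Module.Basis.equiv_apply, Equiv.refl_apply, Module.Basis.finTwoProd_zero]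
  have hTw : T w = ((0:ℝ), (1:ℝ)) := by
    rw [← hBw, hT, Module.Basis.equiv_apply, Equiv.refl_apply, Module.Basis.finTwoProd_one]
  have hTcont : Continuous ⇑T := T.toContinuousLinearEquiv.continuous
  set K' := ⇑T '' K with hK'
  set L' := ⇑T '' L with hL'
  have hK'c : IsCompact K' := hKc.image hTcont
  have hL'c : IsCompact L' := hLc.image hTcont
  have hK'v : Convex ℝ K' := by
    have := hKv.linear_image (T : (ℝ×ℝ) →ₗ[ℝ] (ℝ×ℝ))
    simpa using this
  have hL'v : Convex ℝ L' := by
    have := hLv.linear_image (T : (ℝ×ℝ) →ₗ[ℝ] (ℝ×ℝ))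
    simpa using this
  have hK'ne : K'.Nonempty := hKne.image _
  have hL'ne : L'.Nonempty := hLne.image _
  have hp' : T pK ∈ K' := ⟨pK, hpK, rfl⟩
  have hq' : T pK + ((1:ℝ), (0:ℝ)) ∈ K' := by
    refine ⟨pK + v, hpKv, ?_⟩
    rw [map_add, hTv]
  have hr' : T pL ∈ L' := ⟨pL, hpL, rfl⟩
  have hs' : T pL + ((0:ℝ), (1:ℝ)) ∈ L' := by
    refine ⟨pL + w, hpLw, ?_⟩
    rw [map_add, hTw]
  have hmain := mainIneq hK'c hK'v hK'ne hL'c hL'v hL'ne hp' hq'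
    (by simp) hr' hs' (by simp) (by simp)
  have himg : K' + L' = ⇑T '' (K + L) := by
    have := Set.image_add (T.toLinearMap.toAddMonoidHom) (s := K) (t := L)
    rw [hK', hL']
    exact (by simpa using this : ⇑T '' (K + L) = ⇑T '' K + ⇑T '' L).symm
  set d := ENNReal.ofReal |LinearMap.det (T : (ℝ×ℝ) →ₗ[ℝ] (ℝ×ℝ))| with hd
  have hvolim : ∀ S : Set (ℝ×ℝ), volume (⇑T '' S) = d * volume S := by
    intro S
    have := Measure.addHaar_image_linearMap (volume : Measure (ℝ×ℝ))
      (T : (ℝ×ℝ) →ₗ[ℝ] (ℝ×ℝ)) S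
    simpa [hd] using this
  rw [hK', hL', himg, hvolim, hvolim, hvolim, ← mul_add] at hmain
  have hd0 : d ≠ 0 := by
    rw [hd, Ne, ENNReal.ofReal_eq_zero, not_le]
    exact abs_pos.2 T.isUnit_det'.ne_zero
  have hdtop : d ≠ ⊤ := ENNReal.ofReal_ne_top
  exact (ENNReal.mul_right_strictMono hd0 hdtop).lt_iff_lt.1 hmain

lemma two_points {X : Set (ℝ×ℝ)} (hXne : X.Nonempty) (hX : ¬ ∃ p : ℝ×ℝ, X = {p}) :
    ∃ x y, x ∈ X ∧ y ∈ X ∧ x ≠ y := by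
  obtain ⟨x, hx⟩ := hXne
  by_contra h
  push_neg at h
  exact hX ⟨x, Set.eq_singleton_iff_unique_mem.2 ⟨hx, fun y hy => h y x hy hx⟩⟩

lemma dichotomy {X : Set (ℝ×ℝ)} (hXc : IsCompact X) (hXv : Convex ℝ X)
    (hXne : X.Nonempty) (hX : ¬ ∃ p : ℝ×ℝ, X = {p}) :
    (∃ p v w, p ∈ X ∧ p + v ∈ X ∧ p + w ∈ X ∧ LinearIndependent ℝ ![v, w]) ∨
    (∃ a b : ℝ×ℝ, a ≠ b ∧ X = segment ℝ a b) := by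
  classical
  obtain ⟨x0, x1, hx0, hx1, hne⟩ := two_points hXne hX
  set v := x1 - x0 with hv
  have hvne : v ≠ 0 := sub_ne_zero.2 hne.symm
  by_cases hline : ∀ z ∈ X, ∃ t : ℝ, z = x0 + t • v
  · right
    set A : ℝ →ᵃ[ℝ] ℝ×ℝ := AffineMap.lineMap x0 (x0 + v) with hA
    have hAapp : ∀ t : ℝ, A t = x0 + t • v := by
      intro t
      rw [hA, AffineMap.lineMap_apply]
      simp [vsub_eq_sub, vadd_eq_add]
      abel
    set S := ⇑A ⁻¹' X with hS
    have hScv : Convex ℝ S := hXv.affine_preimage A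
    have hScl : IsClosed S := hXc.isClosed.preimage AffineMap.lineMap_continuous
    obtain ⟨R, hR⟩ := hXc.isBounded.exists_norm_le
    have hSsub : S ⊆ Icc (-((R + ‖x0‖)/‖v‖)) ((R + ‖x0‖)/‖v‖) := by
      intro t ht
      have hmem : x0 + t • v ∈ X := by rw [← hAapp]; exact ht
      have h1 : ‖t • v‖ ≤ R + ‖x0‖ := by
        have := hR _ hmem
        calc ‖t • v‖ = ‖(x0 + t • v) - x0‖ := by congr 1; abel
          _ ≤ ‖x0 + t • v‖ + ‖x0‖ := norm_sub_le _ _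
          _ ≤ R + ‖x0‖ := by linarith
      rw [norm_smul, Real.norm_eq_abs] at h1
      have hvpos : 0 < ‖v‖ := norm_pos_iff.2 hvne
      rw [mem_Icc, ← abs_le]
      rw [le_div_iff₀ hvpos]
      linarith
    have hSc : IsCompact S := isCompact_Icc.of_isClosed_subset hScl hSsub
    have hSne : S.Nonempty := ⟨0, by
      show A 0 ∈ X
      rw [hAapp]; simpa using hx0⟩
    set t1 := sInf S with ht1
    set t2 := sSup S with ht2
    have ht1S : t1 ∈ S := hSc.sInf_mem hSne
    have ht2S : t2 ∈ S := hSc.sSup_mem hSne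
    have hSeq : S = Icc t1 t2 := by
      apply Subset.antisymm
      · intro t ht
        exact ⟨csInf_le hSc.bddBelow ht, le_csSup hSc.bddAbove ht⟩
      · intro t ht
        have := hScv.segment_subset ht1S ht2S
        rw [segment_eq_Icc (le_trans ht.1 ht.2)] at this
        exact this ht
    have hXeq : X = ⇑A '' S := by
      apply Subset.antisymm
      · intro z hz
        obtain ⟨t, rfl⟩ := hline z hz
        exact ⟨t, by rwa [hS, mem_preimage, hAapp], hAapp t⟩
      · rintro z ⟨t, ht, rfl⟩
        exact ht
    have hseg : X = segment ℝ (A t1) (A t2) := by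
      rw [hXeq, hSeq, ← segment_eq_Icc (csInf_le hSc.bddBelow ht2S)]
      exact image_segment ℝ A t1 t2
    refine ⟨A t1, A t2, ?_, hseg⟩
    intro hAeq
    have ht12 : t1 ≠ t2 := by
      intro h12
      apply hX
      refine ⟨A t1, ?_⟩
      rw [hXeq, hSeq, ← h12, Icc_self, image_singleton]
    apply ht12
    have : A t2 - A t1 = (t2 - t1) • v := by
      rw [hAapp, hAapp]
      rw [sub_smul]
      abel
    rw [hAeq] at this
    have h0 : (t2 - t1) • v = 0 := by rw [← this]; abel
    rcases smul_eq_zero.1 h0 with h | h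
    · linarith [sub_eq_zero.1 (by linarith [h] : t2 - t1 = 0)]
    · exact absurd h hvne
  · left
    push_neg at hline
    obtain ⟨z, hz, hzt⟩ := hline
    refine ⟨x0, v, z - x0, hx0, by simpa [hv] using hx1, by simpa using hz, ?_⟩
    rw [LinearIndependent.pair_iff]
    intro a b hab
    by_cases hb : b = 0
    · subst hb
      simp only [zero_smul, add_zero, smul_eq_zero] at hab
      rcases hab with h | h
      · exact ⟨h, rfl⟩
      · exact absurd h hvne
    · exfalso
      apply hzt (-a / b)
      have h1 : b • (z - x0) = -(a • v) := by
        rw [add_comm] at hab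
        exact add_eq_zero_iff_eq_neg.1 hab
      have h2 : z - x0 = (-a/b) • v := by
        calc z - x0 = b⁻¹ • (b • (z - x0)) := by
              rw [smul_smul, inv_mul_cancel₀ hb, one_smul]
          _ = b⁻¹ • (-(a • v)) := by rw [h1]
          _ = (-a/b) • v := by
              rw [smul_neg, smul_smul, ← neg_smul]
              congr 1
              field_simp
      rw [← h2]
      abel


lemma pick_indep {v1 v2 w : ℝ×ℝ} (hind : LinearIndependent ℝ ![v1, v2]) (hw : w ≠ 0) :
    LinearIndependent ℝ ![v1, w] ∨ LinearIndependent ℝ ![v2, w] := by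
  by_contra h
  push_neg at h
  obtain ⟨h1, h2⟩ := h
  rw [linearIndependent_fin2] at h1 h2
  push_neg at h1 h2
  obtain ⟨a1, ha1⟩ := h1 hw
  obtain ⟨a2, ha2⟩ := h2 hw
  simp only [Matrix.cons_val_zero, Matrix.cons_val_one, Matrix.head_cons] at ha1 ha2
  have h0 : a2 • v1 + (-a1) • v2 = 0 := by
    rw [← ha1, ← ha2, smul_smul, smul_smul, ← add_smul,
      show a2 * a1 + (-a1) * a2 = 0 from by ring, zero_smul]
  obtain ⟨hA2, hA1⟩ := (LinearIndependent.pair_iff.1 hind) a2 (-a1) h0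
  have ha1z : a1 = 0 := by linarith [neg_eq_zero.1 hA1]
  have hv1 : v1 = 0 := by rw [← ha1, ha1z, zero_smul]
  have := hind.ne_zero 0
  simp only [Matrix.cons_val_zero] at this
  exact this hv1


end AuxArea

/-- For compact convex (nonempty) subsets `K, L` of ℝ², the strict inequality
`Area (K + L) > Area K + Area L` holds unless `K` is a single point, or `L` is
a single point, or `K` and `L` are two parallel segments. -/
theorem area_minkowski_sum_gt (K L : Set (ℝ × ℝ))
    (hKc : IsCompact K) (hKv : Convex ℝ K) (hKne : K.Nonempty)
    (hLc : IsCompact L) (hLv : Convex ℝ L) (hLne : L.Nonempty)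
    (hK : ¬ ∃ p : ℝ × ℝ, K = {p}) (hL : ¬ ∃ p : ℝ × ℝ, L = {p})
    (hseg : ¬ ∃ a b c d : ℝ × ℝ, K = segment ℝ a b ∧ L = segment ℝ c d ∧
      ¬ LinearIndependent ℝ ![b - a, d - c]) :
    volume K + volume L < volume (K + L) := by
  rcases AuxArea.dichotomy hKc hKv hKne hK with ⟨p, v1, v2, hp, hpv1, hpv2, hind⟩ | ⟨a, b, hab, hKseg⟩
  · obtain ⟨y0, y1, hy0, hy1, hyne⟩ := AuxArea.two_points hLne hL
    have hw : y1 - y0 ≠ 0 := sub_ne_zero.2 hyne.symm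
    have hy1' : y0 + (y1 - y0) ∈ L := by simpa using hy1
    rcases AuxArea.pick_indep hind hw with h | h
    · exact AuxArea.keyLemma hKc hKv hKne hLc hLv hLne h hp hpv1 hy0 hy1'
    · exact AuxArea.keyLemma hKc hKv hKne hLc hLv hLne h hp hpv2 hy0 hy1'
  · rcases AuxArea.dichotomy hLc hLv hLne hL with ⟨p, w1, w2, hp, hpw1, hpw2, hind⟩ | ⟨c, d, hcd, hLseg⟩
    · obtain ⟨x0, x1, hx0, hx1, hxne⟩ := AuxArea.two_points hKne hK
      have hv : x1 - x0 ≠ 0 := sub_ne_zero.2 hxne.symm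
      have hx1' : x0 + (x1 - x0) ∈ K := by simpa using hx1
      rw [add_comm K L, add_comm (volume K)]
      rcases AuxArea.pick_indep hind hv with h | h
      · exact AuxArea.keyLemma hLc hLv hLne hKc hKv hKne h hp hpw1 hx0 hx1'
      · exact AuxArea.keyLemma hLc hLv hLne hKc hKv hKne h hp hpw2 hx0 hx1'
    · have hind : LinearIndependent ℝ ![b - a, d - c] := by
        by_contra hni
        exact hseg ⟨a, b, c, d, hKseg, hLseg, hni⟩
      have ha : a ∈ K := by rw [hKseg]; exact left_mem_segment ℝ a b
      have hb' : b ∈ K := by rw [hKseg]; exact right_mem_segment ℝ a b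
      have hb : a + (b - a) ∈ K := by simpa using hb'
      have hc : c ∈ L := by rw [hLseg]; exact left_mem_segment ℝ c d
      have hd' : d ∈ L := by rw [hLseg]; exact right_mem_segment ℝ c d
      have hd : c + (d - c) ∈ L := by simpa using hd'
      exact AuxArea.keyLemma hKc hKv hKne hLc hLv hLne hind ha hb hc hd
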